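/- For any real numbers x and y with x > y ≥ 0, the function t ↦ cosh(tx)/cosh(ty) is strictly increasing on the positive reals. -/

import Mathlib

theorem cosh_ratio_strictMonoOn (x y : ℝ) (hxy : x > y) (hy : y ≥ 0) :
    StrictMonoOn (fun t : ℝ => Real.cosh (t * x) / Real.cosh (t * y)) (Set.Ioi 0) := by
  apply strictMonoOn_of_deriv_pos (convex_Ioi 0)
  · exact (((Real.continuous_cosh.comp (continuous_id.mul continuous_const)).div
      (Real.continuous_cosh.comp (continuous_id.mul continuous_const))
      (fun t => (Real.cosh_pos (t * y)).ne')).continuousOn)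
  · intro t ht
    rw [interior_Ioi] at ht
    have h1 : HasDerivAt (fun t : ℝ => Real.cosh (t * x)) (Real.sinh (t * x) * x) t := by
      simpa [Function.comp_def] using (Real.hasDerivAt_cosh (t * x)).comp t ((hasDerivAt_id t).mul_const x)
    have h2 : HasDerivAt (fun t : ℝ => Real.cosh (t * y)) (Real.sinh (t * y) * y) t := by
      simpa [Function.comp_def] using (Real.hasDerivAt_cosh (t * y)).comp t ((hasDerivAt_id t).mul_const y)
    have h := h1.div h2 (Real.cosh_pos (t * y)).ne'
    rw [show (fun t : ℝ => Real.cosh (t * x) / Real.cosh (t * y)) = ((fun t : ℝ => Real.cosh (t * x)) / fun t => Real.cosh (t * y)) from rfl, h.deriv]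
    apply div_pos
    · have hs : Real.sinh (t * x) * Real.cosh (t * y)
          - Real.cosh (t * x) * Real.sinh (t * y) = Real.sinh (t * x - t * y) :=
        (Real.sinh_sub (t * x) (t * y)).symm
      have hpos : 0 < Real.sinh (t * x - t * y) := by
        rw [Real.sinh_pos_iff]
        have : 0 < t * (x - y) := mul_pos ht (by linarith)
        linarith [mul_sub t x y]
      have hs2 : 0 ≤ Real.sinh (t * y) := Real.sinh_nonneg_iff.2 (mul_nonneg ht.le hy)
      have hc1 : 0 < Real.cosh (t * x) := Real.cosh_pos _
      nlinarith [mul_pos (show (0:ℝ) < x by linarith) hpos,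
        mul_nonneg (mul_nonneg (sub_nonneg.2 hxy.le) hs2) hc1.le]
    · positivity
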